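/- Let d ≥ 1, N ≥ 1, q ∈ (1,2), q' = q/(q−1), r = q'/2, and let K : ℝ^d → M_N(ℂ) be measurable with K(x) = K(−x)* a.e. and K ∈ L^r(ℝ^d, M_N(ℂ)). For s > 0 define J(s) := sup { E(w) : w ∈ L^q(ℝ^d, ℂ^N), ∫_{ℝ^d} |w|^q dx = s }. Then J(s) = s^{2/q} J(1) for all s > 0, and if J(1) > 0 then the strong binding inequality holds: J(s + s') > J(s) + J(s') for all s, s' > 0. -/

import Mathlib

open MeasureTheory Matrix Pointwise

/-- The squared Euclidean norm `|v|²_{ℂ^N}` of a vector `v ∈ ℂ^N`. -/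
noncomputable def vecNormSq {N : ℕ} (v : Fin N → ℂ) : ℝ := ∑ i, ‖v i‖ ^ 2

/-- The bilinear energy `E(w₁, w₂) = ∬ ⟨w₁(x), K(x−y) w₂(y)⟩_{ℂ^N} dx dy`. -/
noncomputable def diracEnergy {d N : ℕ}
    (K : EuclideanSpace ℝ (Fin d) → Matrix (Fin N) (Fin N) ℂ)
    (w₁ w₂ : EuclideanSpace ℝ (Fin d) → Fin N → ℂ) : ℂ :=
  ∫ x, ∫ y, dotProduct (star (w₁ x)) ((K (x - y)) *ᵥ (w₂ y))

/-- `J(s) = sup { E(w) : w ∈ L^q(ℝ^d, ℂ^N), ∫ |w|^q = s }`. -/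
noncomputable def diracJ (d N : ℕ) (q : ℝ)
    (K : EuclideanSpace ℝ (Fin d) → Matrix (Fin N) (Fin N) ℂ) (s : ℝ) : ℝ :=
  sSup {a : ℝ | ∃ w : EuclideanSpace ℝ (Fin d) → Fin N → ℂ,
    MemLp w (ENNReal.ofReal q) volume ∧
    (∫ x, vecNormSq (w x) ^ (q / 2)) = s ∧
    a = (diracEnergy K w w).re}

lemma diracScaleMem (d N : ℕ) (q : ℝ) (hq0 : 0 < q)
    (K : EuclideanSpace ℝ (Fin d) → Matrix (Fin N) (Fin N) ℂ)
    (c t a : ℝ) (hc : 0 < c)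
    (ha : a ∈ {a : ℝ | ∃ w : EuclideanSpace ℝ (Fin d) → Fin N → ℂ,
      MemLp w (ENNReal.ofReal q) volume ∧
      (∫ x, vecNormSq (w x) ^ (q / 2)) = t ∧
      a = (diracEnergy K w w).re}) :
    c ^ 2 * a ∈ {a : ℝ | ∃ w : EuclideanSpace ℝ (Fin d) → Fin N → ℂ,
      MemLp w (ENNReal.ofReal q) volume ∧
      (∫ x, vecNormSq (w x) ^ (q / 2)) = c ^ q * t ∧
      a = (diracEnergy K w w).re} := by
  obtain ⟨w, hw, hint, hE⟩ := ha
  refine ⟨fun x => (c : ℂ) • w x, hw.const_smul (c : ℂ), ?_, ?_⟩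
  · have hvec : ∀ v : Fin N → ℂ, vecNormSq ((c : ℂ) • v) = c ^ 2 * vecNormSq v := by
      intro v
      simp only [vecNormSq, Pi.smul_apply, smul_eq_mul, norm_mul, Complex.norm_real,
        Real.norm_eq_abs, abs_of_pos hc, mul_pow, Finset.mul_sum]
    have key : ∀ x, vecNormSq ((c : ℂ) • w x) ^ (q / 2)
        = c ^ q * vecNormSq (w x) ^ (q / 2) := by
      intro x
      have hnn : 0 ≤ vecNormSq (w x) := Finset.sum_nonneg fun i _ => by positivity
      rw [hvec, Real.mul_rpow (sq_nonneg c) hnn,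
        ← Real.rpow_natCast c 2, ← Real.rpow_mul hc.le]
      have h2q : ((2:ℕ):ℝ) * (q / 2) = q := by push_cast; ring
      rw [h2q]
    simp_rw [key]
    rw [integral_const_mul, hint]
  · have hpt : ∀ x y : EuclideanSpace ℝ (Fin d),
        dotProduct (star ((c : ℂ) • w x)) ((K (x - y)) *ᵥ ((c : ℂ) • w y))
        = (c : ℂ) ^ 2 * dotProduct (star (w x)) ((K (x - y)) *ᵥ (w y)) := by
      intro x y
      rw [star_smul, Matrix.mulVec_smul, smul_dotProduct, dotProduct_smul]
      simp only [smul_eq_mul, Complex.star_def, Complex.conj_ofReal]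
      ring
    have hEsc : diracEnergy K (fun x => (c : ℂ) • w x) (fun x => (c : ℂ) • w x)
        = (c : ℂ) ^ 2 * diracEnergy K w w := by
      unfold diracEnergy
      simp_rw [hpt, ← smul_eq_mul, integral_smul]
    rw [hEsc, hE]
    have h2 : ((c : ℂ) ^ 2) = ((c ^ 2 : ℝ) : ℂ) := by push_cast; ring
    rw [h2, Complex.re_ofReal_mul]


/-- **Scaling law and strong binding inequality** for the maximization problem
`J(s)`: one has `J(s) = s^{2/q} J(1)`, and if `J(1) > 0` then
`J(s + s') > J(s) + J(s')` for all `s, s' > 0`. -/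
theorem diracJ_scaling_and_strong_binding
    (d N : ℕ) (hd : 1 ≤ d) (hN : 1 ≤ N)
    (q r : ℝ) (hq1 : 1 < q) (hq2 : q < 2) (hr : r = (q / (q - 1)) / 2)
    (K : EuclideanSpace ℝ (Fin d) → Matrix (Fin N) (Fin N) ℂ)
    (hKmeas : ∀ i j, Measurable fun x => K x i j)
    (hKsym : ∀ᵐ x : EuclideanSpace ℝ (Fin d), K (-x) = (K x)ᴴ)
    (hKr : ∀ i j, MemLp (fun x => K x i j) (ENNReal.ofReal r) volume) :
    (∀ s : ℝ, 0 < s → diracJ d N q K s = s ^ (2 / q) * diracJ d N q K 1) ∧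
    (0 < diracJ d N q K 1 →
      ∀ s s' : ℝ, 0 < s → 0 < s' →
        diracJ d N q K (s + s') > diracJ d N q K s + diracJ d N q K s') := by
  have hq0 : (0 : ℝ) < q := lt_trans one_pos hq1
  have hscal : ∀ s : ℝ, 0 < s → diracJ d N q K s = s ^ (2 / q) * diracJ d N q K 1 := by
    intro s hs
    have hsq2 : (s ^ (-(1/q))) ^ 2 = s ^ (-(2/q)) := by
      rw [← Real.rpow_natCast (s ^ (-(1/q))) 2, ← Real.rpow_mul hs.le]
      norm_num
      ring_nf
    have hsq2' : (s ^ ((1:ℝ)/q)) ^ 2 = s ^ (2/q) := by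
      rw [← Real.rpow_natCast (s ^ ((1:ℝ)/q)) 2, ← Real.rpow_mul hs.le]
      norm_num
      ring_nf
    have hseq : {a : ℝ | ∃ w : EuclideanSpace ℝ (Fin d) → Fin N → ℂ,
        MemLp w (ENNReal.ofReal q) volume ∧
        (∫ x, vecNormSq (w x) ^ (q / 2)) = s ∧
        a = (diracEnergy K w w).re}
        = s ^ (2 / q) • {a : ℝ | ∃ w : EuclideanSpace ℝ (Fin d) → Fin N → ℂ,
        MemLp w (ENNReal.ofReal q) volume ∧
        (∫ x, vecNormSq (w x) ^ (q / 2)) = 1 ∧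
        a = (diracEnergy K w w).re} := by
      ext a
      constructor
      · intro ha
        have h1 := diracScaleMem d N q hq0 K (s ^ (-(1/q))) s a
          (Real.rpow_pos_of_pos hs _) ha
        have hcq : (s ^ (-(1/q))) ^ q * s = 1 := by
          rw [← Real.rpow_mul hs.le]
          have : -(1/q) * q = -1 := by field_simp
          rw [this, Real.rpow_neg_one, inv_mul_cancel₀ hs.ne']
        rw [hcq, hsq2] at h1
        refine Set.mem_smul_set.mpr ⟨s ^ (-(2/q)) * a, h1, ?_⟩
        rw [smul_eq_mul, ← mul_assoc, ← Real.rpow_add hs]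
        norm_num
      · intro ha
        obtain ⟨b, hb, rfl⟩ := Set.mem_smul_set.mp ha
        have h1 := diracScaleMem d N q hq0 K (s ^ ((1:ℝ)/q)) 1 b
          (Real.rpow_pos_of_pos hs _) hb
        have hcq : (s ^ ((1:ℝ)/q)) ^ q * 1 = s := by
          rw [← Real.rpow_mul hs.le, mul_one]
          have : (1:ℝ)/q * q = 1 := by field_simp
          rw [this, Real.rpow_one]
        rw [hcq, hsq2'] at h1
        simpa [smul_eq_mul] using h1
    unfold diracJ
    rw [hseq, Real.sSup_smul_of_nonneg (Real.rpow_nonneg hs.le _), smul_eq_mul]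
  refine ⟨hscal, ?_⟩
  intro hJ1 s s' hs hs'
  have hss : (0:ℝ) < s + s' := by linarith
  rw [hscal s hs, hscal s' hs', hscal (s + s') hss]
  set p : ℝ := 2 / q with hp
  have hp1 : 1 < p := (one_lt_div hq0).mpr hq2
  have hkey : s ^ p + s' ^ p < (s + s') ^ p := by
    have e1 : s ^ p = s * s ^ (p - 1) := by
      rw [show p = 1 + (p - 1) by ring, Real.rpow_add hs, Real.rpow_one]
      ring_nf
    have e2 : s' ^ p = s' * s' ^ (p - 1) := by
      rw [show p = 1 + (p - 1) by ring, Real.rpow_add hs', Real.rpow_one]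
      ring_nf
    have e3 : (s + s') ^ p = s * (s + s') ^ (p - 1) + s' * (s + s') ^ (p - 1) := by
      rw [← add_mul, show p = 1 + (p - 1) by ring, Real.rpow_add hss, Real.rpow_one]
      ring_nf
    have l1 : s ^ (p - 1) < (s + s') ^ (p - 1) :=
      Real.rpow_lt_rpow hs.le (by linarith) (by linarith)
    have l2 : s' ^ (p - 1) < (s + s') ^ (p - 1) :=
      Real.rpow_lt_rpow hs'.le (by linarith) (by linarith)
    rw [e1, e2, e3]
    have := mul_lt_mul_of_pos_left l1 hs
    have := mul_lt_mul_of_pos_left l2 hs'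
    linarith
  nlinarith [hkey, hJ1]
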